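/- Let R be an associative ring and λ be an infinite cardinal with λ ≥ |R|. Let S be the class of flat left R-modules of cardinality at most λ. Then a left R-module is flat if and only if it admits an ordinal-indexed filtration whose successive quotients are isomorphic to modules from S. In particular, the class of flat left R-modules is deconstructible. -/

import Mathlib

/-!
Common definitions: flatness over a possibly noncommutative ring (via the standard
equational criterion, which is equivalent to exactness of `- ⊗_R M`), vanishing of
`Ext¹`, and cotorsion modules.
-/

universe u
set_option maxHeartbeats 1000000
noncomputable section
open CategoryTheory

/-- Flatness of a left module over a possibly noncommutative ring, expressed via the
standard equational criterion (equivalent to exactness of the functor `- ⊗_R M`). -/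
def IsFlatModule (R : Type u) [Ring R] (M : Type u) [AddCommGroup M] [Module R M] : Prop :=
  ∀ (n : ℕ) (r : Fin n → R) (x : Fin n → M), (∑ i, r i • x i) = 0 →
    ∃ (m : ℕ) (b : Fin n → Fin m → R) (y : Fin m → M),
      (∀ i, x i = ∑ j, b i j • y j) ∧ (∀ j, (∑ i, r i * b i j) = 0)

/-- `Ext¹_R(F, C) = 0`, where `Ext` is the derived functor of `Hom` on the abelian
category of left `R`-modules. -/
def Ext1Vanishes (R : Type u) [Ring R] (F : Type u) [AddCommGroup F] [Module R F]
    (C : Type u) [AddCommGroup C] [Module R C] : Prop :=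
  Subsingleton (((Ext ℤ (ModuleCat.{u} R) 1).obj
    (Opposite.op (ModuleCat.of R F))).obj (ModuleCat.of R C))

/-- A left `R`-module `C` is cotorsion if `Ext¹_R(F, C) = 0` for every flat left
`R`-module `F`. -/
def IsCotorsion (R : Type u) [Ring R] (C : Type u) [AddCommGroup C] [Module R C] : Prop :=
  ∀ (F : Type u) [AddCommGroup F] [Module R F], IsFlatModule R F → Ext1Vanishes R F C

/-- An ordinal-indexed filtration of a module `M`: a family `F` of submodules indexed by
the ordinals `≤ α` (the values at ordinals `> α` are irrelevant) with `F 0 = ⊥`,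
`F α = ⊤`, `F` monotone, and continuity at limit ordinals. -/
structure IsOrdinalFiltration (R : Type u) [Ring R] {M : Type u} [AddCommGroup M] [Module R M]
    (α : Ordinal.{u}) (F : Ordinal.{u} → Submodule R M) : Prop where
  zero : F 0 = ⊥
  top : F α = ⊤
  mono : ∀ ⦃i j : Ordinal.{u}⦄, i ≤ j → j ≤ α → F i ≤ F j
  limit : ∀ ⦃j : Ordinal.{u}⦄, j ≤ α → Order.IsSuccLimit j → F j = ⨆ i < j, F i

/-- The successive quotient `F (i+1) / F i` of a filtration. -/
abbrev succQuot (R : Type u) [Ring R] {M : Type u} [AddCommGroup M] [Module R M]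
    (F : Ordinal.{u} → Submodule R M) (i : Ordinal.{u}) : Type u :=
  ↥(F (i + 1)) ⧸ (Submodule.comap (F (i + 1)).subtype (F i))

/-- `M` is filtered by (modules isomorphic to) modules from the class `S`: it admits an
ordinal-indexed filtration whose successive quotients are isomorphic to members of `S`. -/
def IsFilteredBy (R : Type u) [Ring R] (S : Set (ModuleCat.{u} R))
    (M : Type u) [AddCommGroup M] [Module R M] : Prop :=
  ∃ (α : Ordinal.{u}) (F : Ordinal.{u} → Submodule R M), IsOrdinalFiltration R α F ∧
    ∀ i < α, ∃ N ∈ S, Nonempty ((succQuot R F i) ≃ₗ[R] N)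



namespace FlatDecon

open Cardinal

section Basic

variable {R : Type u} [Ring R] {M N : Type u} [AddCommGroup M] [Module R M]
  [AddCommGroup N] [Module R N]

/-- Condition (A): relations among elements of `P` have witnesses inside `P`. -/
def CondA (P : Submodule R M) : Prop :=
  ∀ (n : ℕ) (r : Fin n → R) (x : Fin n → M), (∀ i, x i ∈ P) → (∑ i, r i • x i) = 0 →
    ∃ (m : ℕ) (b : Fin n → Fin m → R) (y : Fin m → M), (∀ j, y j ∈ P) ∧
      (∀ i, x i = ∑ j, b i j • y j) ∧ (∀ j, (∑ i, r i * b i j) = 0)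

/-- Condition (B): single-equation purity of `P` in `M`. -/
def CondB (P : Submodule R M) : Prop :=
  ∀ (n : ℕ) (r : Fin n → R) (p : M), p ∈ P → (∃ m : Fin n → M, ∑ i, r i • m i = p) →
    ∃ q : Fin n → M, (∀ i, q i ∈ P) ∧ ∑ i, r i • q i = p

def Good (P : Submodule R M) : Prop := CondA P ∧ CondB P

theorem flat_iff_condA_top : IsFlatModule R M ↔ CondA (⊤ : Submodule R M) := by
  constructor
  · intro h n r x _ hx
    obtain ⟨m, b, y, h1, h2⟩ := h n r x hx
    exact ⟨m, b, y, fun _ => trivial, h1, h2⟩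
  · intro h n r x hx
    obtain ⟨m, b, y, _, h1, h2⟩ := h n r x (fun _ => trivial) hx
    exact ⟨m, b, y, h1, h2⟩

theorem condA_iff_flat (P : Submodule R M) : CondA P ↔ IsFlatModule R ↥P := by
  constructor
  · intro h n r x hx
    have hx' : (∑ i, r i • ((x i : M))) = 0 := by
      have := congrArg (Submodule.subtype P) hx
      simpa using this
    obtain ⟨m, b, y, hy, h1, h2⟩ := h n r (fun i => (x i : M)) (fun i => (x i).2) hx'
    refine ⟨m, b, fun j => ⟨y j, hy j⟩, fun i => ?_, h2⟩
    apply Subtype.ext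
    simpa using h1 i
  · intro h n r x hx hrel
    have hrel' : (∑ i, (r i • (⟨x i, hx i⟩ : ↥P))) = 0 := by
      apply Subtype.ext
      simpa using hrel
    obtain ⟨m, b, y, h1, h2⟩ := h n r (fun i => ⟨x i, hx i⟩) hrel'
    refine ⟨m, b, fun j => (y j : M), fun j => (y j).2, fun i => ?_, h2⟩
    have := congrArg (Submodule.subtype P) (h1 i)
    simpa using this

theorem flat_congr (e : M ≃ₗ[R] N) (h : IsFlatModule R M) : IsFlatModule R N := by
  intro n r x hx
  have hx' : (∑ i, r i • e.symm (x i)) = 0 := by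
    have := congrArg e.symm hx
    simpa [map_sum] using this
  obtain ⟨m, b, y, h1, h2⟩ := h n r (fun i => e.symm (x i)) hx'
  refine ⟨m, b, fun j => e (y j), fun i => ?_, h2⟩
  have := congrArg e (h1 i)
  simpa [map_sum] using this

theorem condA_bot : CondA (⊥ : Submodule R M) := by
  intro n r x hx _
  refine ⟨0, fun _ => Fin.elim0, Fin.elim0, fun j => j.elim0, fun i => ?_, fun j => j.elim0⟩
  simpa using hx i

theorem condB_bot : CondB (⊥ : Submodule R M) := by
  intro n r p hp _
  refine ⟨fun _ => 0, fun i => Submodule.zero_mem _, ?_⟩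
  simp at hp
  simp [hp]

theorem good_bot : Good (⊥ : Submodule R M) := ⟨condA_bot, condB_bot⟩

theorem condA_iSup {ι : Type*} [Nonempty ι] (P : ι → Submodule R M)
    (hd : Directed (· ≤ ·) P) (h : ∀ i, CondA (P i)) : CondA (⨆ i, P i) := by
  intro n r x hx hrel
  have hx' : ∀ i, ∃ k, x i ∈ P k := fun i =>
    (Submodule.mem_iSup_of_directed P hd).1 (hx i)
  choose k hk using hx'
  obtain ⟨z, hz⟩ := hd.finite_le k
  obtain ⟨m, b, y, hy, h1, h2⟩ := h z n r x (fun i => hz i (hk i)) hrel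
  exact ⟨m, b, y, fun j => Submodule.mem_iSup_of_directed P hd |>.2 ⟨z, hy j⟩, h1, h2⟩

theorem condB_iSup {ι : Type*} [Nonempty ι] (P : ι → Submodule R M)
    (hd : Directed (· ≤ ·) P) (h : ∀ i, CondB (P i)) : CondB (⨆ i, P i) := by
  intro n r p hp hsol
  obtain ⟨z, hz⟩ := (Submodule.mem_iSup_of_directed P hd).1 hp
  obtain ⟨q, hq, hq2⟩ := h z n r p hz hsol
  exact ⟨q, fun i => (Submodule.mem_iSup_of_directed P hd).2 ⟨z, hq i⟩, hq2⟩

theorem sum_swap_smul {n m : ℕ} (r : Fin n → R) (b : Fin n → Fin m → R) (Y : Fin m → M) :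
    ∑ i, r i • (∑ j, b i j • Y j) = ∑ j, (∑ i, r i * b i j) • Y j := by
  simp only [Finset.smul_sum, smul_smul, Finset.sum_smul]
  exact Finset.sum_comm

/-- If `M` is flat and `P` satisfies condition (B), then `M ⧸ P` is flat. -/
theorem flat_quot (hM : IsFlatModule R M) {P : Submodule R M} (hP : CondB P) :
    IsFlatModule R (M ⧸ P) := by
  intro n r x hx
  have hsur : Function.Surjective P.mkQ := Submodule.Quotient.mk_surjective P
  choose m hm using fun i => hsur (x i)
  have hmem : (∑ i, r i • m i) ∈ P := by
    rw [← Submodule.Quotient.mk_eq_zero]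
    show P.mkQ _ = 0
    rw [map_sum]
    simp only [map_smul, hm]
    exact hx
  obtain ⟨q, hq, hq2⟩ := hP n r _ hmem ⟨m, rfl⟩
  have hrel : (∑ i, r i • (m i - q i)) = 0 := by
    simp only [smul_sub, Finset.sum_sub_distrib, hq2, sub_self]
  obtain ⟨m', b, y, h1, h2⟩ := hM n r _ hrel
  refine ⟨m', b, fun j => P.mkQ (y j), fun i => ?_, h2⟩
  calc x i = P.mkQ (m i) := (hm i).symm
    _ = P.mkQ (m i - q i) := by
        rw [Submodule.mkQ_apply, Submodule.mkQ_apply, Submodule.Quotient.eq]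
        simpa using hq i
    _ = P.mkQ (∑ j, b i j • y j) := by rw [h1 i]
    _ = ∑ j, b i j • P.mkQ (y j) := by rw [map_sum]; simp only [map_smul]

/-- Key successor step: if `P ≤ P'`, `P` satisfies condition (A), and the quotient
`P'/P` is flat, then `P'` satisfies condition (A). -/
theorem condA_of_quot {P P' : Submodule R M} (hle : P ≤ P') (hA : CondA P)
    (hq : IsFlatModule R (↥P' ⧸ Submodule.comap P'.subtype P)) : CondA P' := by
  intro n r x hx hrel
  set K := Submodule.comap P'.subtype P with hK
  set X : Fin n → ↥P' := fun i => ⟨x i, hx i⟩ with hX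
  have hXrel : (∑ i, r i • X i) = 0 := by
    apply Subtype.ext; simpa using hrel
  have hrel1 : (∑ i, r i • K.mkQ (X i)) = 0 := by
    have e : ∑ i, r i • K.mkQ (X i) = K.mkQ (∑ i, r i • X i) := by
      rw [map_sum]; simp only [map_smul]
    rw [e, hXrel, map_zero]
  obtain ⟨m, b, η, h1, h2⟩ := hq n r _ hrel1
  have hsur : Function.Surjective K.mkQ := Submodule.Quotient.mk_surjective K
  choose Y hY using fun j => hsur (η j)
  have hd : ∀ i, x i - (∑ j, b i j • (Y j : M)) ∈ P := by
    intro i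
    have : K.mkQ (X i - ∑ j, b i j • Y j) = 0 := by
      rw [map_sub, map_sum]
      simp only [map_smul, hY]
      rw [h1 i, sub_self]
    have h3 : X i - ∑ j, b i j • Y j ∈ K := (Submodule.Quotient.mk_eq_zero _).1 this
    rw [hK, Submodule.mem_comap] at h3
    simpa using h3
  set d : Fin n → M := fun i => x i - (∑ j, b i j • (Y j : M)) with hdd
  have hdrel : (∑ i, r i • d i) = 0 := by
    simp only [hdd, smul_sub, Finset.sum_sub_distrib, hrel, zero_sub, neg_eq_zero]
    rw [sum_swap_smul]
    simp only [h2, zero_smul, Finset.sum_const_zero]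
  obtain ⟨m', c, z, hz, h1', h2'⟩ := hA n r d hd hdrel
  refine ⟨m + m', fun i => Fin.append (b i) (c i), Fin.append (fun j => (Y j : M)) z,
    ?_, ?_, ?_⟩
  · intro j
    refine Fin.addCases (fun j0 => ?_) (fun j1 => ?_) j
    · simpa [Fin.append_left] using (Y j0).2
    · simpa [Fin.append_right] using hle (hz j1)
  · intro i
    rw [Fin.sum_univ_add]
    simp only [Fin.append_left, Fin.append_right]
    have h5 : x i - (∑ j, b i j • (Y j : M)) = ∑ j, c i j • z j := h1' i
    exact sub_eq_iff_eq_add'.mp h5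
  · intro j
    refine Fin.addCases (fun j0 => ?_) (fun j1 => ?_) j
    · simpa [Fin.append_left] using h2 j0
    · simpa [Fin.append_right] using h2' j1

theorem condB_comap {P : Submodule R M} (hP : CondB P) {Q : Submodule R (M ⧸ P)}
    (hQ : CondB Q) : CondB (Q.comap P.mkQ) := by
  intro n r p hp ⟨m, hm⟩
  have hQp : P.mkQ p ∈ Q := hp
  obtain ⟨qb, hqb, hqb2⟩ := hQ n r (P.mkQ p) hQp
    ⟨fun i => P.mkQ (m i), by rw [← hm, map_sum]; simp only [map_smul]⟩
  have hsur : Function.Surjective P.mkQ := Submodule.Quotient.mk_surjective P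
  choose u hu using fun i => hsur (qb i)
  have humem : ∀ i, u i ∈ Q.comap P.mkQ := by
    intro i; rw [Submodule.mem_comap, hu i]; exact hqb i
  have hker : p - (∑ i, r i • u i) ∈ P := by
    have : P.mkQ (p - ∑ i, r i • u i) = 0 := by
      rw [map_sub, map_sum]
      simp only [map_smul, hu]
      rw [hqb2, sub_self]
    exact (Submodule.Quotient.mk_eq_zero _).1 this
  obtain ⟨v, hv, hv2⟩ := hP n r _ hker
    ⟨fun i => m i - u i, by
      simp only [smul_sub, Finset.sum_sub_distrib, hm]⟩
  refine ⟨fun i => u i + v i, fun i => ?_, ?_⟩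
  · exact Submodule.add_mem _ (humem i) (Submodule.mem_comap.2 (by
      have hvi : v i ∈ P := hv i
      have h0 : P.mkQ (v i) = 0 := (Submodule.Quotient.mk_eq_zero _).2 hvi
      rw [h0]; exact Q.zero_mem))
  · simp only [smul_add, Finset.sum_add_distrib, hv2]
    abel

/-- The successive quotient of a preimage submodule is isomorphic to `Q`. -/
def comapQuotEquiv (P : Submodule R M) (Q : Submodule R (M ⧸ P)) :
    (↥(Q.comap P.mkQ) ⧸ (P.comap (Q.comap P.mkQ).subtype)) ≃ₗ[R] ↥Q := by
  have hres : ∀ x ∈ Q.comap P.mkQ, P.mkQ x ∈ Q := fun x hx => hx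
  set f : ↥(Q.comap P.mkQ) →ₗ[R] ↥Q := P.mkQ.restrict hres with hf
  have hker : LinearMap.ker f = P.comap (Q.comap P.mkQ).subtype := by
    ext x
    simp only [LinearMap.mem_ker, Submodule.mem_comap, hf]
    constructor
    · intro h
      have : P.mkQ (x : M) = 0 := congrArg Subtype.val h
      exact (Submodule.Quotient.mk_eq_zero _).1 this
    · intro h
      apply Subtype.ext
      exact (Submodule.Quotient.mk_eq_zero _).2 h
  have hsurj : Function.Surjective f := by
    rintro ⟨q, hq⟩
    obtain ⟨x, hx⟩ := Submodule.Quotient.mk_surjective P q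
    refine ⟨⟨x, ?_⟩, ?_⟩
    · rw [Submodule.mem_comap]; show P.mkQ x ∈ Q; rw [show P.mkQ x = q from hx]; exact hq
    · apply Subtype.ext; exact hx
  exact (Submodule.quotEquivOfEq _ _ hker.symm).trans (f.quotKerEquivOfSurjective hsurj)

theorem le_comap_mkQ (P : Submodule R M) (Q : Submodule R (M ⧸ P)) :
    P ≤ Q.comap P.mkQ := by
  intro m hm
  rw [Submodule.mem_comap]
  have h0 : P.mkQ m = 0 := (Submodule.Quotient.mk_eq_zero _).2 hm
  rw [h0]; exact Q.zero_mem

theorem good_comap {P : Submodule R M} (hP : Good P) {Q : Submodule R (M ⧸ P)}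
    (hQ : Good Q) : Good (Q.comap P.mkQ) :=
  ⟨condA_of_quot (le_comap_mkQ P Q) hP.1
      (flat_congr (comapQuotEquiv P Q).symm ((condA_iff_flat Q).1 hQ.1)),
    condB_comap hP.2 hQ.2⟩

variable {lam : Cardinal.{u}}

theorem mk_fun_le {A : Type u} (hA : #A ≤ lam) (hinf : ℵ₀ ≤ lam) (n : ℕ) :
    #(Fin n → A) ≤ lam := by
  rw [Cardinal.mk_arrow, Cardinal.mk_fin]
  simp only [Cardinal.lift_id, Cardinal.lift_uzero, Cardinal.lift_natCast,
    Cardinal.power_natCast]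
  calc #A ^ n ≤ lam ^ n := by
        rw [← Cardinal.power_natCast, ← Cardinal.power_natCast]
        exact Cardinal.power_le_power_right hA
    _ ≤ lam := Cardinal.power_nat_le hinf

omit [AddCommGroup N] [Module R N] in
theorem mk_finsupp_le' {A : Type u} (hA : #A ≤ lam) (hR : #R ≤ lam) (hinf : ℵ₀ ≤ lam) :
    #(A →₀ R) ≤ lam := by
  by_cases hT : Nontrivial R
  · cases finite_or_infinite A
    · haveI := Fintype.ofFinite A
      rw [Cardinal.mk_finsupp_of_fintype]
      calc #R ^ Fintype.card A ≤ lam ^ Fintype.card A := by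
            rw [← Cardinal.power_natCast, ← Cardinal.power_natCast]
            exact Cardinal.power_le_power_right hR
        _ ≤ lam := Cardinal.power_nat_le hinf
    · rw [Cardinal.mk_finsupp_of_infinite]
      exact max_le hA hR
  · rw [not_nontrivial_iff_subsingleton] at hT
    haveI : Subsingleton (A →₀ R) := ⟨fun f g => Finsupp.ext fun a => Subsingleton.elim _ _⟩
    exact Cardinal.mk_le_aleph0.trans hinf

theorem mk_span_le {S : Set M} (hS : #S ≤ lam) (hR : #R ≤ lam) (hinf : ℵ₀ ≤ lam) :
    #(Submodule.span R S) ≤ lam := by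
  have hspan := Finsupp.span_eq_range_linearCombination R S
  have hsurj : Function.Surjective
      (fun l : (↥S →₀ R) => (⟨Finsupp.linearCombination R ((↑) : S → M) l, by
        rw [hspan]; exact ⟨l, rfl⟩⟩ : ↥(Submodule.span R S))) := by
    rintro ⟨x, hx⟩
    rw [hspan] at hx
    obtain ⟨l, hl⟩ := hx
    exact ⟨l, Subtype.ext hl⟩
  exact (Cardinal.mk_le_of_surjective hsurj).trans (mk_finsupp_le' hS hR hinf)

/-- Task data for condition (A) over a submodule `N`. -/
def TaskA (N : Submodule R M) : Type u :=
  {d : Σ n : ℕ, (Fin n → R) × (Fin n → ↥N) // ∑ i : Fin d.1, d.2.1 i • (d.2.2 i : M) = 0}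

/-- Task data for condition (B) over a submodule `N`. -/
def TaskB (N : Submodule R M) : Type u :=
  {d : Σ n : ℕ, (Fin n → R) × ↥N // ∃ m : Fin d.1 → M, ∑ i, d.2.1 i • m i = (d.2.2 : M)}

def witA (hM : IsFlatModule R M) (N : Submodule R M) (a : TaskA N) : Set M :=
  Set.range (hM a.1.1 a.1.2.1 (fun i => (a.1.2.2 i : M)) a.2).choose_spec.choose_spec.choose

def witB (N : Submodule R M) (a : TaskB N) : Set M :=
  Set.range a.2.choose

def enlarge (hM : IsFlatModule R M) (N : Submodule R M) : Submodule R M :=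
  Submodule.span R ((N : Set M) ∪ ((⋃ a : TaskA N, witA hM N a) ∪ ⋃ a : TaskB N, witB N a))

theorem le_enlarge (hM : IsFlatModule R M) (N : Submodule R M) : N ≤ enlarge hM N :=
  fun _ hx => Submodule.subset_span (Or.inl hx)

theorem mk_taskA_le (hinf : ℵ₀ ≤ lam) (hR : #R ≤ lam) {N : Submodule R M}
    (hN : #N ≤ lam) : #(TaskA N) ≤ lam := by
  refine (Cardinal.mk_subtype_le _).trans ?_
  rw [Cardinal.mk_sigma]
  calc Cardinal.sum (fun n => #((Fin n → R) × (Fin n → ↥N)))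
      ≤ Cardinal.sum (fun _ : ℕ => lam) := by
        apply Cardinal.sum_le_sum
        intro n
        rw [Cardinal.mk_prod]
        simp only [Cardinal.lift_id]
        calc #(Fin n → R) * #(Fin n → ↥N) ≤ lam * lam :=
              mul_le_mul' (mk_fun_le hR hinf n) (mk_fun_le hN hinf n)
          _ = lam := Cardinal.mul_eq_self hinf
    _ = ℵ₀ * lam := by rw [Cardinal.sum_const]; simp
    _ ≤ lam * lam := mul_le_mul' hinf le_rfl
    _ = lam := Cardinal.mul_eq_self hinf

theorem mk_taskB_le (hinf : ℵ₀ ≤ lam) (hR : #R ≤ lam) {N : Submodule R M}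
    (hN : #N ≤ lam) : #(TaskB N) ≤ lam := by
  refine (Cardinal.mk_subtype_le _).trans ?_
  rw [Cardinal.mk_sigma]
  calc Cardinal.sum (fun n => #((Fin n → R) × ↥N))
      ≤ Cardinal.sum (fun _ : ℕ => lam) := by
        apply Cardinal.sum_le_sum
        intro n
        rw [Cardinal.mk_prod]
        simp only [Cardinal.lift_id]
        calc #(Fin n → R) * #↥N ≤ lam * lam := mul_le_mul' (mk_fun_le hR hinf n) hN
          _ = lam := Cardinal.mul_eq_self hinf
    _ = ℵ₀ * lam := by rw [Cardinal.sum_const]; simp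
    _ ≤ lam * lam := mul_le_mul' hinf le_rfl
    _ = lam := Cardinal.mul_eq_self hinf

omit [AddCommGroup N] [Module R N] in
theorem mk_iUnion_wit_le {ι : Type u} (hι : #ι ≤ lam) (hinf : ℵ₀ ≤ lam)
    (f : ι → Set M) (hf : ∀ a, #(f a) ≤ ℵ₀) : #(⋃ a, f a) ≤ lam := by
  refine Cardinal.mk_iUnion_le_sum_mk.trans ?_
  calc Cardinal.sum (fun a => #(f a)) ≤ Cardinal.sum (fun _ : ι => ℵ₀) :=
        Cardinal.sum_le_sum _ _ hf
    _ = #ι * ℵ₀ := by rw [Cardinal.sum_const']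
    _ ≤ lam * lam := mul_le_mul' hι hinf
    _ = lam := Cardinal.mul_eq_self hinf

theorem mk_enlarge_le (hM : IsFlatModule R M) (hinf : ℵ₀ ≤ lam) (hR : #R ≤ lam)
    {N : Submodule R M} (hN : #N ≤ lam) : #(enlarge hM N) ≤ lam := by
  apply mk_span_le _ hR hinf
  refine (Cardinal.mk_union_le _ _).trans ?_
  refine Cardinal.add_le_of_le hinf hN ?_
  refine (Cardinal.mk_union_le _ _).trans ?_
  refine Cardinal.add_le_of_le hinf ?_ ?_
  · refine mk_iUnion_wit_le (mk_taskA_le hinf hR hN) hinf _ ?_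
    intro a
    unfold witA
    exact (Set.finite_range _).lt_aleph0.le
  · refine mk_iUnion_wit_le (mk_taskB_le hinf hR hN) hinf _ ?_
    intro a
    unfold witB
    exact (Set.finite_range _).lt_aleph0.le

/-- The closure lemma: any small subset of a flat module is contained in a small
"good" submodule. -/
theorem exists_good (hM : IsFlatModule R M) (hinf : ℵ₀ ≤ lam) (hR : #R ≤ lam)
    (X : Set M) (hX : #X ≤ lam) :
    ∃ P : Submodule R M, Good P ∧ X ⊆ (P : Set M) ∧ #P ≤ lam := by
  classical
  let C : ℕ → Submodule R M := fun k => Nat.rec (Submodule.span R X) (fun _ N => enlarge hM N) k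
  have hCsucc : ∀ k, C (k + 1) = enlarge hM (C k) := fun _ => rfl
  have hmono : Monotone C := monotone_nat_of_le_succ fun k => le_enlarge hM (C k)
  have hdir : Directed (· ≤ ·) C := hmono.directed_le
  refine ⟨⨆ k, C k, ⟨?_, ?_⟩, ?_, ?_⟩
  · -- CondA
    intro n r x hx hrel
    have hx' : ∀ i, ∃ k, x i ∈ C k := fun i => (Submodule.mem_iSup_of_directed C hdir).1 (hx i)
    choose k hk using hx'
    obtain ⟨z, hz⟩ := hdir.finite_le k
    set a : TaskA (C z) := ⟨⟨n, r, fun i => ⟨x i, hz i (hk i)⟩⟩, hrel⟩ with ha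
    set E := hM a.1.1 a.1.2.1 (fun i => (a.1.2.2 i : M)) a.2 with hE
    obtain ⟨hy1, hy2⟩ := E.choose_spec.choose_spec.choose_spec
    refine ⟨E.choose, E.choose_spec.choose, E.choose_spec.choose_spec.choose, ?_, hy1, hy2⟩
    intro j
    have hj : E.choose_spec.choose_spec.choose j ∈ witA hM (C z) a := Set.mem_range_self j
    have hmem : E.choose_spec.choose_spec.choose j ∈ C (z + 1) := by
      rw [hCsucc]
      exact Submodule.subset_span (Or.inr (Or.inl (Set.mem_iUnion.2 ⟨a, hj⟩)))
    exact (le_iSup C (z + 1)) hmem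
  · -- CondB
    intro n r p hp hsol
    obtain ⟨z, hz⟩ := (Submodule.mem_iSup_of_directed C hdir).1 hp
    set a : TaskB (C z) := ⟨⟨n, r, ⟨p, hz⟩⟩, hsol⟩ with ha
    refine ⟨a.2.choose, ?_, a.2.choose_spec⟩
    intro i
    have hi : a.2.choose i ∈ witB (C z) a := Set.mem_range_self i
    have hmem : a.2.choose i ∈ C (z + 1) := by
      rw [hCsucc]
      exact Submodule.subset_span (Or.inr (Or.inr (Set.mem_iUnion.2 ⟨a, hi⟩)))
    exact (le_iSup C (z + 1)) hmem
  · -- X ⊆ P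
    intro x hx
    exact (le_iSup C 0) (Submodule.subset_span hx)
  · -- cardinality
    have hC : ∀ k, #↥(C k) ≤ lam := by
      intro k
      induction k with
      | zero => exact mk_span_le hX hR hinf
      | succ k ih => rw [hCsucc]; exact mk_enlarge_le hM hinf hR ih
    have hset : ((⨆ k, C k : Submodule R M) : Set M) = ⋃ k, SetLike.coe (C k) := by
      ext x
      rw [Set.mem_iUnion]
      exact Submodule.mem_iSup_of_directed C hdir
    rw [show (↥(⨆ k, C k) : Type u) = ↥((⨆ k, C k : Submodule R M) : Set M) from rfl, hset]
    have hlift := Cardinal.mk_iUnion_le_sum_mk_lift (f := fun k : ℕ => SetLike.coe (C k))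
    rw [Cardinal.lift_uzero] at hlift
    refine hlift.trans ?_
    calc Cardinal.sum (fun k => #↥(SetLike.coe (C k))) ≤ Cardinal.sum (fun _ : ℕ => lam) :=
          Cardinal.sum_le_sum _ _ (fun k => hC k)
      _ = ℵ₀ * lam := by rw [Cardinal.sum_const]; simp
      _ ≤ lam * lam := mul_le_mul' hinf le_rfl
      _ = lam := Cardinal.mul_eq_self hinf

/-! ### The transfinite filtration of a flat module -/

end Basic

section Filtration

variable (R : Type u) [Ring R] {M : Type u} [AddCommGroup M] [Module R M]
  (lam : Cardinal.{u})

open scoped Classical in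
def filtStep (P : Submodule R M) (x : M) : Submodule R M :=
  if h : ∃ Q : Submodule R (M ⧸ P), Good Q ∧ P.mkQ x ∈ Q ∧ #↥Q ≤ lam
  then Submodule.comap P.mkQ h.choose else ⊤

def filt (g : Ordinal.{u} → M) (i : Ordinal.{u}) : Submodule R M :=
  Ordinal.limitRecOn (motive := fun _ => Submodule R M) i ⊥ (fun j Pj => filtStep R lam Pj (g j))
    (fun j _ ih => ⨆ k : Set.Iio j, ih k k.2)

variable {lam}

theorem filt_zero (g : Ordinal.{u} → M) : filt R lam g 0 = ⊥ :=
  Ordinal.limitRecOn_zero _ _ _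

theorem filt_succ (g : Ordinal.{u} → M) (i : Ordinal.{u}) :
    filt R lam g (i + 1) = filtStep R lam (filt R lam g i) (g i) := by
  unfold filt
  rw [Ordinal.add_one_eq_succ, Ordinal.limitRecOn_succ]

theorem filt_limit' (g : Ordinal.{u} → M) {j : Ordinal.{u}} (hj : Order.IsSuccLimit j) :
    filt R lam g j = ⨆ k : Set.Iio j, filt R lam g k.1 := by
  unfold filt
  rw [Ordinal.limitRecOn_limit _ _ _ _ hj]

theorem filt_limit (g : Ordinal.{u} → M) {j : Ordinal.{u}} (hj : Order.IsSuccLimit j) :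
    filt R lam g j = ⨆ i, ⨆ _ : i < j, filt R lam g i := by
  rw [filt_limit' R g hj]
  exact (iSup_subtype' (p := fun i => i < j) (f := fun i _ => filt R lam g i)).symm

theorem le_filtStep (P : Submodule R M) (x : M) : P ≤ filtStep R lam P x := by
  unfold filtStep
  split_ifs with h
  · exact le_comap_mkQ P _
  · exact le_top

theorem filt_mono (g : Ordinal.{u} → M) :
    ∀ j i : Ordinal.{u}, i ≤ j → filt R lam g i ≤ filt R lam g j := by
  intro j
  induction j using Ordinal.limitRecOn with
  | zero =>
    intro i hij
    rw [nonpos_iff_eq_zero] at hij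
    rw [hij]
  | add_one j ih =>
    intro i hij
    rcases Order.le_succ_iff_eq_or_le.1 hij with h | h
    · rw [h, Ordinal.add_one_eq_succ]
    · refine (ih i h).trans ?_
      rw [filt_succ R g]
      exact le_filtStep R (filt R lam g j) (g j)
  | limit j hj ih =>
    intro i hij
    rcases eq_or_lt_of_le hij with h | h
    · rw [h]
    · rw [filt_limit' R g hj]
      exact le_iSup (fun k : Set.Iio j => filt R lam g k.1) ⟨i, h⟩

theorem filt_good (hM : IsFlatModule R M) (hinf : ℵ₀ ≤ lam) (hR : #R ≤ lam)
    (g : Ordinal.{u} → M) : ∀ i : Ordinal.{u}, Good (filt R lam g i) := by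
  intro i
  induction i using Ordinal.limitRecOn with
  | zero => rw [filt_zero R g]; exact good_bot
  | add_one j ih =>
    rw [filt_succ R g]
    set P := filt R lam g j with hP
    have hMP : IsFlatModule R (M ⧸ P) := flat_quot hM ih.2
    have hex : ∃ Q : Submodule R (M ⧸ P), Good Q ∧ P.mkQ (g j) ∈ Q ∧ #↥Q ≤ lam := by
      obtain ⟨Q, hQg, hQX, hQc⟩ := exists_good hMP hinf hR {P.mkQ (g j)}
        (Cardinal.mk_le_aleph0.trans hinf)
      exact ⟨Q, hQg, hQX (Set.mem_singleton _), hQc⟩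
    unfold filtStep
    rw [dif_pos hex]
    exact good_comap ih hex.choose_spec.1
  | limit j hj ih =>
    rw [filt_limit' R g hj]
    haveI : Nonempty (Set.Iio j) := ⟨⟨0, hj.pos⟩⟩
    have hdir : Directed (· ≤ ·) (fun k : Set.Iio j => filt R lam g k.1) := by
      intro a b
      rcases le_total a.1 b.1 with h | h
      · exact ⟨b, filt_mono R g b.1 a.1 h, le_rfl⟩
      · exact ⟨a, le_rfl, filt_mono R g a.1 b.1 h⟩
    constructor
    · exact condA_iSup (fun k : Set.Iio j => filt R lam g k.1) hdir (fun k => (ih k.1 k.2).1)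
    · exact condB_iSup (fun k : Set.Iio j => filt R lam g k.1) hdir (fun k => (ih k.1 k.2).2)

theorem filt_succ_spec (hM : IsFlatModule R M) (hinf : ℵ₀ ≤ lam) (hR : #R ≤ lam)
    (g : Ordinal.{u} → M) (i : Ordinal.{u}) :
    ∃ Q : Submodule R (M ⧸ filt R lam g i), Good Q ∧ #↥Q ≤ lam ∧
      filt R lam g (i + 1) = Submodule.comap (filt R lam g i).mkQ Q ∧
      g i ∈ filt R lam g (i + 1) := by
  set P := filt R lam g i with hP
  have hgood : Good P := filt_good R hM hinf hR g i
  have hMP : IsFlatModule R (M ⧸ P) := flat_quot hM hgood.2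
  have hex : ∃ Q : Submodule R (M ⧸ P), Good Q ∧ P.mkQ (g i) ∈ Q ∧ #↥Q ≤ lam := by
    obtain ⟨Q, hQg, hQX, hQc⟩ := exists_good hMP hinf hR {P.mkQ (g i)}
      (Cardinal.mk_le_aleph0.trans hinf)
    exact ⟨Q, hQg, hQX (Set.mem_singleton _), hQc⟩
  have heq : filt R lam g (i + 1) = Submodule.comap P.mkQ hex.choose := by
    rw [filt_succ R g]
    unfold filtStep
    rw [dif_pos hex]
  refine ⟨hex.choose, hex.choose_spec.1, hex.choose_spec.2.2, heq, ?_⟩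
  rw [heq, Submodule.mem_comap]
  exact hex.choose_spec.2.1

/-! ### The backward direction -/

theorem flat_of_filtration {α : Ordinal.{u}} {F : Ordinal.{u} → Submodule R M}
    (hfil : IsOrdinalFiltration R α F)
    (hq : ∀ i < α, IsFlatModule R (succQuot R F i)) : IsFlatModule R M := by
  have key : ∀ i : Ordinal.{u}, i ≤ α → CondA (F i) := by
    intro i
    induction i using Ordinal.induction with
    | h i IH =>
      intro hiα
      rcases Ordinal.zero_or_succ_or_isSuccLimit i with h0 | ⟨k, hk⟩ | hlim
      · rw [h0, hfil.zero]; exact condA_bot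
      · replace hk := hk.symm
        have hki : k < i := by rw [hk]; exact Order.lt_succ k
        have hkα : k ≤ α := (hki.trans_le hiα).le
        have hkltα : k < α := by
          rw [hk] at hiα
          exact (Order.succ_le_iff).1 hiα
        have hA : CondA (F k) := IH k hki hkα
        have hflatq : IsFlatModule R (succQuot R F k) := hq k hkltα
        have hle : F k ≤ F (k + 1) := hfil.mono (by
          rw [Ordinal.add_one_eq_succ]; exact (Order.le_succ k)) (by
          rw [Ordinal.add_one_eq_succ, ← hk]; exact hiα)
        have : CondA (F (k + 1)) := condA_of_quot hle hA hflatq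
        rw [hk, ← Ordinal.add_one_eq_succ]
        exact this
      · have hsub : (⨆ k, ⨆ _ : k < i, F k) = ⨆ k : {k : Ordinal.{u} // k < i}, F k.1 :=
          iSup_subtype' (p := fun k => k < i) (f := fun k _ => F k)
        rw [hfil.limit hiα hlim, hsub]
        haveI : Nonempty {k : Ordinal.{u} // k < i} := ⟨⟨0, hlim.pos⟩⟩
        have hdir : Directed (· ≤ ·) (fun k : {k : Ordinal.{u} // k < i} => F k.1) := by
          intro a b
          rcases le_total a.1 b.1 with h | h
          · exact ⟨b, hfil.mono h (b.2.le.trans hiα), le_rfl⟩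
          · exact ⟨a, le_rfl, hfil.mono h (a.2.le.trans hiα)⟩
        exact condA_iSup (fun k : {k : Ordinal.{u} // k < i} => F k.1) hdir (fun k => IH k.1 k.2 (k.2.le.trans hiα))
  have : CondA (F α) := key α le_rfl
  rw [hfil.top] at this
  exact flat_iff_condA_top.2 this

end Filtration

end FlatDecon


/-- Enochs; Bican–El Bashir–Enochs. Let `R` be an associative ring and
`λ` an infinite cardinal with `λ ≥ |R|`. Let `S` be the class of flat left `R`-modules of
cardinality at most `λ`. Then a left `R`-module is flat if and only if it is filtered by
modules from `S`; in particular, the class of flat left `R`-modules is deconstructible. -/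
theorem flat_modules_deconstructible (R : Type u) [Ring R] (lam : Cardinal.{u})
    (hinf : Cardinal.aleph0 ≤ lam) (hR : Cardinal.mk R ≤ lam) :
    (∀ (M : Type u) [AddCommGroup M] [Module R M],
      IsFlatModule R M ↔
        IsFilteredBy R {N : ModuleCat.{u} R | IsFlatModule R ↥N ∧ Cardinal.mk ↥N ≤ lam} M) ∧
    (∃ S : Set (ModuleCat.{u} R), ∀ (M : Type u) [AddCommGroup M] [Module R M],
      IsFlatModule R M ↔ IsFilteredBy R S M) := by
  have main : ∀ (M : Type u) [AddCommGroup M] [Module R M],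
      IsFlatModule R M ↔
        IsFilteredBy R {N : ModuleCat.{u} R | IsFlatModule R ↥N ∧ Cardinal.mk ↥N ≤ lam} M := by
    intro M _ _
    constructor
    · -- forward direction
      intro hM
      classical
      set α : Ordinal.{u} := (Cardinal.mk M).ord with hα
      obtain ⟨f⟩ : Nonempty (α.ToType ≃ M) := by
        apply Cardinal.eq.1
        rw [Cardinal.mk_toType, hα, Cardinal.card_ord]
      set g : Ordinal.{u} → M := fun i => if h : i < α then f ((Ordinal.ToType.mk (o := α)) ⟨i, h⟩)
        else 0 with hg
      have hgsur : ∀ m : M, ∃ i, i < α ∧ g i = m := by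
        intro m
        set t := (Ordinal.ToType.mk (o := α)).symm (f.symm m) with ht
        refine ⟨t.1, t.2, ?_⟩
        rw [hg]
        simp only
        have ht2 : t.1 < α := t.2
        rw [dif_pos ht2]
        have h1 : (⟨t.1, t.2⟩ : Set.Iio α) = t := rfl
        rw [h1, ht, OrderIso.apply_symm_apply, Equiv.apply_symm_apply]
      refine ⟨α, FlatDecon.filt R lam g, ⟨FlatDecon.filt_zero R g, ?_,
        fun i j hij _ => FlatDecon.filt_mono R g j i hij,
        fun j _ hj => FlatDecon.filt_limit R g hj⟩, ?_⟩
      · -- top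
        rw [eq_top_iff]
        intro m _
        obtain ⟨i, hi, hgi⟩ := hgsur m
        obtain ⟨Q, _, _, _, hmem⟩ := FlatDecon.filt_succ_spec R hM hinf hR g i
        rw [← hgi]
        refine FlatDecon.filt_mono R g α (i + 1) ?_ hmem
        rw [Ordinal.add_one_eq_succ]
        exact Order.succ_le_iff.2 hi
      · -- successive quotients
        intro i _
        obtain ⟨Q, hQg, hQc, hEq, _⟩ := FlatDecon.filt_succ_spec R hM hinf hR g i
        refine ⟨ModuleCat.of R ↥Q, ⟨?_, ?_⟩, ?_⟩
        · exact (FlatDecon.condA_iff_flat Q).1 hQg.1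
        · exact hQc
        · show Nonempty ((↥(FlatDecon.filt R lam g (i + 1)) ⧸
            Submodule.comap (FlatDecon.filt R lam g (i + 1)).subtype (FlatDecon.filt R lam g i))
              ≃ₗ[R] ↥Q)
          rw [hEq]
          exact ⟨FlatDecon.comapQuotEquiv (FlatDecon.filt R lam g i) Q⟩
    · -- backward direction
      rintro ⟨α, F, hfil, hquot⟩
      refine FlatDecon.flat_of_filtration R hfil ?_
      intro i hi
      obtain ⟨N, hN, ⟨e⟩⟩ := hquot i hi
      exact FlatDecon.flat_congr e.symm hN.1
  exact ⟨main, ⟨_, main⟩⟩
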